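/- Let X and Y be Polish spaces and let c be a cost function on X × Y of the form c(x₁,y₁,x₂,y₂) = h(c_X(x₁,x₂), c_Y(y₁,y₂)) for marginal cost functions c_X on X and c_Y on Y and a measurable function h : [0,∞]² → [0,∞]. If f_X : X → X and f_Y : Y → Y are measurable maps that leave c_X and c_Y invariant (i.e., c_X(f_X(x₁), f_X(x₂)) = c_X(x₁,x₂) for all x₁,x₂ ∈ X, and similarly for c_Y), then for the map f = f_X × f_Y and any probability measure γ on X × Y, it holds that τ_c(f_*γ) = τ_c(γ). -/

import Mathlib

open MeasureTheory ENNReal Filter Topology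

/-- The optimal transport cost between two measures `μ` and `ν` on a space `Z`
with base cost `c`. -/
noncomputable def otCost {Z : Type*} [MeasurableSpace Z]
    (c : Z → Z → ℝ≥0∞) (μ ν : Measure Z) : ℝ≥0∞ :=
  ⨅ (π : Measure (Z × Z)) (_ : π.map Prod.fst = μ ∧ π.map Prod.snd = ν),
    ∫⁻ p, c p.1 p.2 ∂π

/-- The transport dependency of a measure `γ` on `X × Y`. -/
noncomputable def tdep {X Y : Type*} [MeasurableSpace X] [MeasurableSpace Y]
    (c : X × Y → X × Y → ℝ≥0∞) (γ : Measure (X × Y)) : ℝ≥0∞ :=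
  otCost c γ ((γ.map Prod.fst).prod (γ.map Prod.snd))

open ProbabilityTheory

/-- Easy direction: pushing forward couplings shows the transport cost does not increase
under a cost-invariant map. -/
lemma otCost_map_le {Z : Type*} [MeasurableSpace Z]
    (c : Z → Z → ℝ≥0∞) (hc : Measurable (Function.uncurry c))
    (f : Z → Z) (hf : Measurable f)
    (hinv : ∀ z₁ z₂, c (f z₁) (f z₂) = c z₁ z₂)
    (μ ν : Measure Z) :
    otCost c (μ.map f) (ν.map f) ≤ otCost c μ ν := by
  have hc' : Measurable fun p : Z × Z => c p.1 p.2 := hc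
  refine le_iInf₂ fun π hπ => ?_
  have hmap : Measurable (Prod.map f f) := hf.prodMap hf
  have h1 : (π.map (Prod.map f f)).map Prod.fst = μ.map f := by
    rw [Measure.map_map measurable_fst hmap]
    have he : (Prod.fst ∘ Prod.map f f : Z × Z → Z) = f ∘ Prod.fst := rfl
    rw [he, ← Measure.map_map hf measurable_fst, hπ.1]
  have h2 : (π.map (Prod.map f f)).map Prod.snd = ν.map f := by
    rw [Measure.map_map measurable_snd hmap]
    have he : (Prod.snd ∘ Prod.map f f : Z × Z → Z) = f ∘ Prod.snd := rfl
    rw [he, ← Measure.map_map hf measurable_snd, hπ.2]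
  refine (iInf₂_le (π.map (Prod.map f f)) ⟨h1, h2⟩).trans_eq ?_
  rw [lintegral_map hc' hmap]
  refine lintegral_congr fun p => ?_
  simp [hinv]

/-- Hard direction: on a Polish space, the transport cost does not decrease under a
cost-invariant measurable map, by the gluing/disintegration argument. -/
lemma le_otCost_map {Z : Type*} [TopologicalSpace Z] [PolishSpace Z]
    [MeasurableSpace Z] [BorelSpace Z]
    (c : Z → Z → ℝ≥0∞) (hc : Measurable (Function.uncurry c))
    (f : Z → Z) (hf : Measurable f)
    (hinv : ∀ z₁ z₂, c (f z₁) (f z₂) = c z₁ z₂)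
    (μ ν : Measure Z) [IsProbabilityMeasure μ] [IsProbabilityMeasure ν] :
    otCost c μ ν ≤ otCost c (μ.map f) (ν.map f) := by
  have hc' : Measurable fun p : Z × Z => c p.1 p.2 := hc
  refine le_iInf₂ fun π' hπ' => ?_
  obtain ⟨hπ'1, hπ'2⟩ := hπ'
  -- π' is a probability measure
  haveI : IsProbabilityMeasure (μ.map f) := Measure.isProbabilityMeasure_map hf.aemeasurable
  haveI : IsProbabilityMeasure π' := by
    constructor
    have := congrArg (fun m : Measure Z => m Set.univ) hπ'1
    simpa [Measure.map_apply measurable_fst MeasurableSet.univ] using this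
  set g : Z → Z × Z := fun w => (f w, w) with hg
  have hgm : Measurable g := hf.prodMk measurable_id
  set m : Measure (Z × Z) := ν.map g with hm
  haveI : IsProbabilityMeasure m := Measure.isProbabilityMeasure_map hgm.aemeasurable
  have hmfst : m.fst = ν.map f := by
    rw [hm, Measure.fst, Measure.map_map measurable_fst hgm]
    rfl
  have hmsnd : m.snd = ν := by
    rw [hm, Measure.snd, Measure.map_map measurable_snd hgm]
    exact Measure.map_id
  haveI : Nonempty Z := Measure.nonempty_of_neZero ν
  set κ := π'.condKernel with hκ
  set lam := m.condKernel with hlam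
  have hdis1 : π'.fst ⊗ₘ κ = π' := π'.disintegrate κ
  have hdis2 : m.fst ⊗ₘ lam = m := m.disintegrate lam
  have hπ'fst : π'.fst = μ.map f := by rw [Measure.fst]; exact hπ'1
  -- a.e. over m, the second coordinate maps to the first
  have hSmeas : MeasurableSet {p : Z × Z | f p.2 = p.1} :=
    (hf.comp measurable_snd).stronglyMeasurable.measurableSet_eq_fun
      measurable_fst.stronglyMeasurable
  have hae_m : ∀ᵐ p ∂m, f p.2 = p.1 := by
    have hz : m {p : Z × Z | f p.2 = p.1}ᶜ = 0 := by
      rw [hm, Measure.map_apply hgm hSmeas.compl]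
      have hemp : g ⁻¹' {p : Z × Z | f p.2 = p.1}ᶜ = ∅ := by ext w; simp [hg]
      rw [hemp]; exact measure_empty
    rw [ae_iff]; exact hz
  have hae : ∀ᵐ b ∂m.fst, ∀ᵐ w ∂lam b, f w = b := by
    rw [← hdis2] at hae_m
    exact Measure.ae_ae_of_ae_compProd hae_m
  -- a measurable null superset of the bad set
  set T := {b : Z | ¬ ∀ᵐ w ∂lam b, f w = b} with hT
  set N := toMeasurable m.fst T with hN
  have hNmeas : MeasurableSet N := measurableSet_toMeasurable _ _
  have hNnull : m.fst N = 0 := by rw [hN, measure_toMeasurable]; exact ae_iff.mp hae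
  have hmemN : ∀ b ∉ N, ∀ᵐ w ∂lam b, f w = b := fun b hb =>
    not_not.mp fun h => hb (subset_toMeasurable _ _ h)
  have hkmeas : Measurable fun a => κ a N := Kernel.measurable_coe κ hNmeas
  have key : ∫⁻ z, κ (f z) N ∂μ = 0 := by
    rw [← lintegral_map hkmeas hf, ← hπ'fst]
    have h1 : ∫⁻ a, κ a N ∂π'.fst = (π'.fst ⊗ₘ κ) (Prod.snd ⁻¹' N) := by
      rw [Measure.compProd_apply (measurable_snd hNmeas)]
      rfl
    rw [h1, hdis1, ← Measure.map_apply measurable_snd hNmeas, hπ'2, ← hmfst]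
    exact hNnull
  have hzae : ∀ᵐ z ∂μ, κ (f z) N = 0 := by
    have := (lintegral_eq_zero_iff (hkmeas.comp hf)).mp key
    filter_upwards [this] with z hz using hz
  -- marginals of the glued coupling
  haveI : IsMarkovKernel ((lam.comp κ).comap f hf) := by infer_instance
  set π : Measure (Z × Z) := μ ⊗ₘ ((lam.comp κ).comap f hf) with hπdef
  have hfst : π.map Prod.fst = μ := by
    have := Measure.fst_compProd μ ((lam.comp κ).comap f hf)
    rwa [Measure.fst] at this
  have hsnd : π.map Prod.snd = ν := by
    ext s hs
    rw [Measure.map_apply measurable_snd hs, hπdef,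
      Measure.compProd_apply (measurable_snd hs)]
    have hpre : ∀ a : Z, (Prod.mk a ⁻¹' (Prod.snd ⁻¹' s)) = s := fun a => rfl
    simp_rw [hpre]
    have hκ2app : ∀ z : Z, ((lam.comp κ).comap f hf) z s = ∫⁻ b, lam b s ∂κ (f z) :=
      fun z => by rw [Kernel.comap_apply, Kernel.comp_apply' _ _ _ hs]
    simp_rw [hκ2app]
    have hmeaslam : Measurable fun p : Z × Z => lam p.2 s :=
      (Kernel.measurable_coe lam hs).comp measurable_snd
    have hmeas2 : Measurable fun a : Z => ∫⁻ b, lam b s ∂κ a :=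
      Measurable.lintegral_kernel_prod_right' hmeaslam
    rw [← lintegral_map hmeas2 hf, ← hπ'fst]
    have h3 : ∫⁻ a, ∫⁻ b, lam b s ∂κ a ∂π'.fst = ∫⁻ p : Z × Z, lam p.2 s ∂π' := by
      conv_rhs => rw [← hdis1]
      rw [Measure.lintegral_compProd hmeaslam]
    rw [h3, ← lintegral_map (Kernel.measurable_coe lam hs) measurable_snd, hπ'2, ← hmfst]
    have h4 : ∫⁻ b, lam b s ∂m.fst = (m.fst ⊗ₘ lam) (Prod.snd ⁻¹' s) := by
      rw [Measure.compProd_apply (measurable_snd hs)]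
      rfl
    rw [h4, hdis2, ← Measure.map_apply measurable_snd hs, ← Measure.snd, hmsnd]
  -- cost of the glued coupling
  have hGmeas : Measurable fun a : Z => ∫⁻ b, c a b ∂κ a :=
    Measurable.lintegral_kernel_prod_right' hc'
  have hcost : ∫⁻ p, c p.1 p.2 ∂π = ∫⁻ p, c p.1 p.2 ∂π' := by
    have L1 : ∫⁻ p, c p.1 p.2 ∂π = ∫⁻ z, ∫⁻ b, ∫⁻ w, c z w ∂lam b ∂κ (f z) ∂μ := by
      rw [hπdef, Measure.lintegral_compProd hc']
      refine lintegral_congr fun z => ?_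
      have hczm : Measurable fun w : Z => c z w := hc'.comp measurable_prodMk_left
      show ∫⁻ w, c z w ∂((lam.comp κ).comap f hf) z = _
      rw [Kernel.comap_apply, Kernel.lintegral_comp _ _ _ hczm]
    have L2 : ∫⁻ p, c p.1 p.2 ∂π' = ∫⁻ z, ∫⁻ b, c (f z) b ∂κ (f z) ∂μ := by
      conv_lhs => rw [← hdis1]
      rw [Measure.lintegral_compProd hc', hπ'fst]
      exact lintegral_map hGmeas hf
    rw [L1, L2]
    refine lintegral_congr_ae ?_
    filter_upwards [hzae] with z hzN
    have hbae : ∀ᵐ b ∂κ (f z), b ∉ N := measure_eq_zero_iff_ae_notMem.mp hzN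
    refine lintegral_congr_ae ?_
    filter_upwards [hbae] with b hb
    have hw : ∀ᵐ w ∂lam b, f w = b := hmemN b hb
    haveI : IsProbabilityMeasure (lam b) := by infer_instance
    calc ∫⁻ w, c z w ∂lam b = ∫⁻ _, c (f z) b ∂lam b := by
          refine lintegral_congr_ae ?_
          filter_upwards [hw] with w hwb
          rw [← hinv z w, hwb]
      _ = c (f z) b := by simp
  exact (iInf₂_le π ⟨hfst, hsnd⟩).trans_eq hcost

/-- If the cost `c` on `X × Y` is a measurable function
`h` of marginal costs `c_X` and `c_Y`, and `f_X`, `f_Y` are measurable maps leaving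
`c_X` and `c_Y` invariant, then the transport dependency is invariant under the
pushforward by `f_X × f_Y`. -/
theorem tdep_invariant_of_cost_invariant
    {X Y : Type*} [TopologicalSpace X] [PolishSpace X] [MeasurableSpace X] [BorelSpace X]
    [TopologicalSpace Y] [PolishSpace Y] [MeasurableSpace Y] [BorelSpace Y]
    (cX : X → X → ℝ≥0∞) (cY : Y → Y → ℝ≥0∞)
    (h : ℝ≥0∞ × ℝ≥0∞ → ℝ≥0∞) (hh : Measurable h)
    (c : X × Y → X × Y → ℝ≥0∞)
    (hc_lsc : LowerSemicontinuous (Function.uncurry c))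
    (hc_symm : ∀ z₁ z₂, c z₁ z₂ = c z₂ z₁)
    (hc_diag : ∀ z, c z z = 0)
    (hc_eq : ∀ z₁ z₂ : X × Y, c z₁ z₂ = h (cX z₁.1 z₂.1, cY z₁.2 z₂.2))
    (fX : X → X) (fY : Y → Y) (hfX : Measurable fX) (hfY : Measurable fY)
    (hinvX : ∀ x₁ x₂, cX (fX x₁) (fX x₂) = cX x₁ x₂)
    (hinvY : ∀ y₁ y₂, cY (fY y₁) (fY y₂) = cY y₁ y₂)
    (γ : Measure (X × Y)) [IsProbabilityMeasure γ] :
    tdep c (γ.map (Prod.map fX fY)) = tdep c γ := by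
  have hf : Measurable (Prod.map fX fY) := hfX.prodMap hfY
  have hc : Measurable (Function.uncurry c) := hc_lsc.measurable
  have hinv : ∀ z₁ z₂ : X × Y, c (Prod.map fX fY z₁) (Prod.map fX fY z₂) = c z₁ z₂ := by
    intro z₁ z₂
    rw [hc_eq (Prod.map fX fY z₁) (Prod.map fX fY z₂), hc_eq z₁ z₂]
    simp [Prod.map, hinvX, hinvY]
  haveI : IsProbabilityMeasure (γ.map (Prod.map fX fY)) :=
    Measure.isProbabilityMeasure_map hf.aemeasurable
  haveI : IsProbabilityMeasure (γ.map (Prod.fst : X × Y → X)) :=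
    Measure.isProbabilityMeasure_map measurable_fst.aemeasurable
  haveI : IsProbabilityMeasure (γ.map (Prod.snd : X × Y → Y)) :=
    Measure.isProbabilityMeasure_map measurable_snd.aemeasurable
  have h1 : (γ.map (Prod.map fX fY)).map Prod.fst = (γ.map Prod.fst).map fX := by
    rw [Measure.map_map measurable_fst hf, Measure.map_map hfX measurable_fst]
    rfl
  have h2 : (γ.map (Prod.map fX fY)).map Prod.snd = (γ.map Prod.snd).map fY := by
    rw [Measure.map_map measurable_snd hf, Measure.map_map hfY measurable_snd]
    rfl
  have hprod : ((γ.map (Prod.map fX fY)).map Prod.fst).prod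
      ((γ.map (Prod.map fX fY)).map Prod.snd)
      = ((γ.map Prod.fst).prod (γ.map Prod.snd)).map (Prod.map fX fY) := by
    rw [h1, h2, Measure.map_prod_map _ _ hfX hfY]
  unfold tdep
  rw [hprod]
  exact le_antisymm
    (otCost_map_le c hc (Prod.map fX fY) hf hinv γ _)
    (le_otCost_map c hc (Prod.map fX fY) hf hinv γ _)
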